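/- If the Hermitian matrix 2γM + C is positive definite, then K(γ) = γ²M + γC + K is positive semidefinite but singular (not invertible). -/

import Mathlib

open Matrix
open scoped ComplexOrder

noncomputable section

/-- The value `x* P x` (which is real for Hermitian `P`), taken as its real part. -/
def qf {n : ℕ} (P : Matrix (Fin n) (Fin n) ℂ) (x : Fin n → ℂ) : ℝ :=
  (star x ⬝ᵥ P.mulVec x).re

/-- The (positive semidefinite) square root of a positive semidefinite matrix,
extended by `0` to all matrices. -/
def msqrt {n : ℕ} (P : Matrix (Fin n) (Fin n) ℂ) : Matrix (Fin n) (Fin n) ℂ :=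
  open scoped Classical in
  if h : P.PosSemidef then
    h.1.eigenvectorUnitary.1 * diagonal ((↑) ∘ Real.sqrt ∘ h.1.eigenvalues) *
      (star h.1.eigenvectorUnitary : Matrix (Fin n) (Fin n) ℂ)
  else 0

/-- The quadratic matrix pencil `K(λ) = λ²M + λC + K`. -/
def Kpen {n : ℕ} (M C K : Matrix (Fin n) (Fin n) ℂ) (lam : ℂ) :
    Matrix (Fin n) (Fin n) ℂ :=
  lam ^ 2 • M + lam • C + K

/-- The real part of the `+`-root of the scalar quadratic
`m(x) λ² + c(x) λ + k(x) = 0`. -/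
def rfun {n : ℕ} (M C K : Matrix (Fin n) (Fin n) ℂ) (x : Fin n → ℂ) : ℝ :=
  open scoped Classical in
  if (qf C x) ^ 2 ≥ 4 * qf M x * qf K x then
    (-(qf C x) + Real.sqrt ((qf C x) ^ 2 - 4 * qf M x * qf K x)) / (2 * qf M x)
  else
    -(qf C x) / (2 * qf M x)

/-- The spectral-shift bound `γ = sup_{x ≠ 0} Re p₊(x)`. -/
def gam {n : ℕ} (M C K : Matrix (Fin n) (Fin n) ℂ) : ℝ :=
  sSup {y : ℝ | ∃ x : Fin n → ℂ, x ≠ 0 ∧ rfun M C K x = y}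

/-- The phase-space matrix `A = [[0, K½ M⁻½], [−M⁻½ K½, −M⁻½ C M⁻½]]`. -/
def phaseA {n : ℕ} (M C K : Matrix (Fin n) (Fin n) ℂ) :
    Matrix (Fin n ⊕ Fin n) (Fin n ⊕ Fin n) ℂ :=
  fromBlocks 0 (msqrt K * (msqrt M)⁻¹)
    (-((msqrt M)⁻¹ * msqrt K)) (-((msqrt M)⁻¹ * C * (msqrt M)⁻¹))

/-- The operator norm of a matrix with respect to the Euclidean norm. -/
def opNorm {m : Type*} [Fintype m] [DecidableEq m] (A : Matrix m m ℂ) : ℝ :=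
  ‖toEuclideanCLM (𝕜 := ℂ) A‖

/-- The block matrix `L(μ) = [[K½ K(μ)⁻½, 0], [μ M½ K(μ)⁻½, I]]`. -/
def Lmat {n : ℕ} (M C K : Matrix (Fin n) (Fin n) ℂ) (mu : ℝ) :
    Matrix (Fin n ⊕ Fin n) (Fin n ⊕ Fin n) ℂ :=
  fromBlocks (msqrt K * (msqrt (Kpen M C K (mu : ℂ)))⁻¹) 0
    ((mu : ℂ) • (msqrt M * (msqrt (Kpen M C K (mu : ℂ)))⁻¹)) 1

-- star of quadratic form for hermitian
lemma star_qf {n : ℕ} {A : Matrix (Fin n) (Fin n) ℂ} (hA : A.IsHermitian) (x : Fin n → ℂ) :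
    star (star x ⬝ᵥ A.mulVec x) = star x ⬝ᵥ A.mulVec x := by
  calc star (star x ⬝ᵥ A.mulVec x) = star (A.mulVec x) ⬝ᵥ x := (star_dotProduct _ _).symm
    _ = star x ᵥ* Aᴴ ⬝ᵥ x := by rw [star_mulVec]
    _ = star x ⬝ᵥ Aᴴ *ᵥ x := (dotProduct_mulVec _ _ _).symm
    _ = star x ⬝ᵥ A *ᵥ x := by rw [hA.eq]

lemma qf_eq {n : ℕ} {A : Matrix (Fin n) (Fin n) ℂ} (hA : A.IsHermitian) (x : Fin n → ℂ) :
    star x ⬝ᵥ A.mulVec x = ((qf A x : ℝ) : ℂ) := by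
  have h := star_qf hA x
  have him : (star x ⬝ᵥ A.mulVec x).im = 0 := by
    have := congrArg Complex.im h
    simp only [Complex.star_def, Complex.conj_im] at this
    linarith
  exact Complex.ext (by simp [qf]) (by simp [him])

lemma qf_pos {n : ℕ} {A : Matrix (Fin n) (Fin n) ℂ} (hA : A.PosDef) {x : Fin n → ℂ}
    (hx : x ≠ 0) : 0 < qf A x := hA.re_dotProduct_pos hx

lemma qf_smul {n : ℕ} (A : Matrix (Fin n) (Fin n) ℂ) (r : ℝ) (x : Fin n → ℂ) :
    qf A ((r : ℂ) • x) = r ^ 2 * qf A x := by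
  simp only [qf, star_smul, mulVec_smul, smul_dotProduct, dotProduct_smul]
  simp [Complex.star_def, smul_smul]
  ring_nf

lemma qf_zero {n : ℕ} (A : Matrix (Fin n) (Fin n) ℂ) : qf A 0 = 0 := by
  simp [qf]

lemma qf_Kpen {n : ℕ} (M C K : Matrix (Fin n) (Fin n) ℂ) (g : ℝ) (x : Fin n → ℂ) :
    qf (Kpen M C K (g : ℂ)) x = g ^ 2 * qf M x + g * qf C x + qf K x := by
  simp only [qf, Kpen, add_mulVec, smul_mulVec, dotProduct_add, dotProduct_smul,
    smul_eq_mul, Complex.add_re, ← Complex.ofReal_pow, Complex.re_ofReal_mul]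

lemma qf_D {n : ℕ} (M C : Matrix (Fin n) (Fin n) ℂ) (g : ℝ) (x : Fin n → ℂ) :
    qf (((2 * g : ℝ) : ℂ) • M + C) x = 2 * g * qf M x + qf C x := by
  simp only [qf, add_mulVec, smul_mulVec, dotProduct_add, dotProduct_smul,
    smul_eq_mul, Complex.add_re, Complex.re_ofReal_mul]

lemma Kpen_isHermitian {n : ℕ} {M C K : Matrix (Fin n) (Fin n) ℂ}
    (hM : M.IsHermitian) (hC : C.IsHermitian) (hK : K.IsHermitian) (g : ℝ) :
    (Kpen M C K (g : ℂ)).IsHermitian := by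
  unfold Kpen
  refine ((Matrix.IsHermitian.add ?_ ?_).add hK) <;>
  · unfold Matrix.IsHermitian at *
    rw [conjTranspose_smul]
    simp [hM, hC, ← Complex.ofReal_pow]

section Scalar
open scoped Classical

lemma scalar_q_nonneg {m c k g : ℝ} (hm : 0 < m)
    (hr : (if c ^ 2 ≥ 4 * m * k then (-c + Real.sqrt (c ^ 2 - 4 * m * k)) / (2 * m)
      else -c / (2 * m)) ≤ g) :
    0 ≤ g ^ 2 * m + g * c + k := by
  split_ifs at hr with hdisc
  · have hD : (0:ℝ) ≤ c ^ 2 - 4 * m * k := by linarith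
    have hs := Real.sqrt_nonneg (c ^ 2 - 4 * m * k)
    have hs2 : Real.sqrt (c ^ 2 - 4 * m * k) ^ 2 = c ^ 2 - 4 * m * k := Real.sq_sqrt hD
    rw [div_le_iff₀ (by linarith : (0:ℝ) < 2 * m)] at hr
    nlinarith [sq_nonneg (2 * m * g + c - Real.sqrt (c ^ 2 - 4 * m * k))]
  · push_neg at hdisc
    nlinarith [sq_nonneg (2 * m * g + c)]

lemma scalar_r_le {m c k g : ℝ} (hm : 0 < m)
    (hq : 0 ≤ g ^ 2 * m + g * c + k) (hd : 0 ≤ 2 * g * m + c) :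
    (if c ^ 2 ≥ 4 * m * k then (-c + Real.sqrt (c ^ 2 - 4 * m * k)) / (2 * m)
      else -c / (2 * m)) ≤ g := by
  split_ifs with hdisc
  · rw [div_le_iff₀ (by linarith : (0:ℝ) < 2 * m)]
    have hD : (0:ℝ) ≤ c ^ 2 - 4 * m * k := by linarith
    have h1 : Real.sqrt (c ^ 2 - 4 * m * k) ≤ 2 * g * m + c := by
      have : c ^ 2 - 4 * m * k ≤ (2 * g * m + c) ^ 2 := by nlinarith
      calc Real.sqrt (c ^ 2 - 4 * m * k) ≤ Real.sqrt ((2 * g * m + c) ^ 2) :=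
            Real.sqrt_le_sqrt this
        _ = 2 * g * m + c := Real.sqrt_sq hd
    linarith
  · rw [div_le_iff₀ (by linarith : (0:ℝ) < 2 * m)]
    linarith

lemma scalar_r_nonpos {m c k : ℝ} (hm : 0 < m) (hc : 0 < c) (hk : 0 < k) :
    (if c ^ 2 ≥ 4 * m * k then (-c + Real.sqrt (c ^ 2 - 4 * m * k)) / (2 * m)
      else -c / (2 * m)) ≤ 0 := by
  split_ifs with hdisc
  · apply div_nonpos_of_nonpos_of_nonneg _ (by linarith)
    have : Real.sqrt (c ^ 2 - 4 * m * k) ≤ c := by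
      calc Real.sqrt (c ^ 2 - 4 * m * k) ≤ Real.sqrt (c ^ 2) :=
            Real.sqrt_le_sqrt (by nlinarith)
        _ = c := Real.sqrt_sq hc.le
    linarith
  · apply div_nonpos_of_nonpos_of_nonneg (by linarith) (by linarith)

end Scalar

section Bounds

variable {n : ℕ}

/-- Euclidean norm on `Fin n → ℂ`. -/
def eucNorm (x : Fin n → ℂ) : ℝ := ‖(WithLp.equiv 2 (Fin n → ℂ)).symm x‖

lemma eucNorm_pos {x : Fin n → ℂ} (hx : x ≠ 0) : 0 < eucNorm x := by
  rw [eucNorm, norm_pos_iff]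
  simpa using hx

lemma qf_continuous (P : Matrix (Fin n) (Fin n) ℂ) :
    Continuous fun y : EuclideanSpace ℂ (Fin n) => qf P (WithLp.equiv 2 (Fin n → ℂ) y) := by
  have h1 : Continuous fun x : Fin n → ℂ => qf P x := by
    simp only [qf, mulVec, dotProduct]
    continuity
  exact h1.comp (PiLp.continuous_ofLp 2 (fun _ : Fin n => ℂ))

lemma qf_lower_bound (hn : 1 ≤ n) {P : Matrix (Fin n) (Fin n) ℂ} (hP : P.PosDef) :
    ∃ a : ℝ, 0 < a ∧ ∀ x : Fin n → ℂ, a * eucNorm x ^ 2 ≤ qf P x := by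
  have hsph : IsCompact (Metric.sphere (0 : EuclideanSpace ℂ (Fin n)) 1) :=
    isCompact_sphere _ _
  have hne : (Metric.sphere (0 : EuclideanSpace ℂ (Fin n)) 1).Nonempty := by
    refine ⟨EuclideanSpace.single ⟨0, hn⟩ (1 : ℂ), ?_⟩
    simp [EuclideanSpace.norm_single]
  obtain ⟨y₀, hy₀mem, hy₀min⟩ := hsph.exists_isMinOn hne (qf_continuous P).continuousOn
  set a : ℝ := qf P (WithLp.equiv 2 (Fin n → ℂ) y₀) with ha
  have hy₀ : y₀ ≠ 0 := by
    intro h0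
    rw [h0] at hy₀mem
    simpa using hy₀mem
  have hapos : 0 < a := qf_pos hP (by simpa using hy₀)
  refine ⟨a, hapos, fun x => ?_⟩
  rcases eq_or_ne x 0 with rfl | hx
  · simp [qf_zero, eucNorm]
  · have ht : 0 < eucNorm x := eucNorm_pos hx
    set t := eucNorm x
    have hmem : (((t⁻¹ : ℝ) : ℂ) • (WithLp.equiv 2 (Fin n → ℂ)).symm x) ∈
        Metric.sphere (0 : EuclideanSpace ℂ (Fin n)) 1 := by
      simp only [mem_sphere_iff_norm, sub_zero, norm_smul]
      rw [Complex.norm_real, Real.norm_eq_abs, abs_of_pos (inv_pos.mpr ht)]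
      have hnx : ‖(WithLp.equiv 2 (Fin n → ℂ)).symm x‖ = t := rfl
      rw [hnx]
      exact inv_mul_cancel₀ ht.ne'
    have hmin := hy₀min hmem
    simp only [Set.mem_setOf_eq] at hmin
    have heq : qf P (WithLp.equiv 2 (Fin n → ℂ)
        (((t⁻¹ : ℝ) : ℂ) • (WithLp.equiv 2 (Fin n → ℂ)).symm x)) = t⁻¹ ^ 2 * qf P x := by
      rw [WithLp.equiv_apply, WithLp.ofLp_smul]
      simp only [WithLp.equiv_symm_apply, WithLp.ofLp_toLp]
      exact qf_smul P t⁻¹ x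
    rw [heq] at hmin
    have h2 : a * t ^ 2 ≤ (t⁻¹ ^ 2 * qf P x) * t ^ 2 := by
      apply mul_le_mul_of_nonneg_right hmin (by positivity)
    calc a * t ^ 2 ≤ (t⁻¹ ^ 2 * qf P x) * t ^ 2 := h2
      _ = qf P x := by field_simp

lemma qf_upper_bound (hn : 1 ≤ n) (P : Matrix (Fin n) (Fin n) ℂ) :
    ∃ b : ℝ, ∀ x : Fin n → ℂ, qf P x ≤ b * eucNorm x ^ 2 := by
  have hsph : IsCompact (Metric.sphere (0 : EuclideanSpace ℂ (Fin n)) 1) :=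
    isCompact_sphere _ _
  have hne : (Metric.sphere (0 : EuclideanSpace ℂ (Fin n)) 1).Nonempty := by
    refine ⟨EuclideanSpace.single ⟨0, hn⟩ (1 : ℂ), ?_⟩
    simp [EuclideanSpace.norm_single]
  obtain ⟨y₀, hy₀mem, hy₀max⟩ := hsph.exists_isMaxOn hne (qf_continuous P).continuousOn
  set b : ℝ := qf P (WithLp.equiv 2 (Fin n → ℂ) y₀) with hb
  refine ⟨b, fun x => ?_⟩
  rcases eq_or_ne x 0 with rfl | hx
  · have h0 : eucNorm (0 : Fin n → ℂ) = 0 := by simp [eucNorm]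
    rw [qf_zero, h0]
    simp
  · have ht : 0 < eucNorm x := eucNorm_pos hx
    set t := eucNorm x
    have hmem : (((t⁻¹ : ℝ) : ℂ) • (WithLp.equiv 2 (Fin n → ℂ)).symm x) ∈
        Metric.sphere (0 : EuclideanSpace ℂ (Fin n)) 1 := by
      simp only [mem_sphere_iff_norm, sub_zero, norm_smul]
      rw [Complex.norm_real, Real.norm_eq_abs, abs_of_pos (inv_pos.mpr ht)]
      have hnx : ‖(WithLp.equiv 2 (Fin n → ℂ)).symm x‖ = t := rfl
      rw [hnx]
      exact inv_mul_cancel₀ ht.ne'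
    have hmax := hy₀max hmem
    simp only [Set.mem_setOf_eq] at hmax
    have heq : qf P (WithLp.equiv 2 (Fin n → ℂ)
        (((t⁻¹ : ℝ) : ℂ) • (WithLp.equiv 2 (Fin n → ℂ)).symm x)) = t⁻¹ ^ 2 * qf P x := by
      rw [WithLp.equiv_apply, WithLp.ofLp_smul]
      simp only [WithLp.equiv_symm_apply, WithLp.ofLp_toLp]
      exact qf_smul P t⁻¹ x
    rw [heq] at hmax
    have h2 : (t⁻¹ ^ 2 * qf P x) * t ^ 2 ≤ b * t ^ 2 :=
      mul_le_mul_of_nonneg_right hmax (by positivity)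
    calc qf P x = (t⁻¹ ^ 2 * qf P x) * t ^ 2 := by field_simp
      _ ≤ b * t ^ 2 := h2

end Bounds

/-- If `2γM + C` is positive definite, then `K(γ)` is positive semidefinite
but not invertible. -/
theorem Kgamma_posSemidef_singular {n : ℕ} (hn : 1 ≤ n)
    (M C K : Matrix (Fin n) (Fin n) ℂ)
    (hM : M.PosDef) (hC : C.PosDef) (hK : K.PosDef)
    (h : (((2 * gam M C K : ℝ) : ℂ) • M + C).PosDef) :
    (Kpen M C K ((gam M C K : ℝ) : ℂ)).PosSemidef ∧
      ¬IsUnit (Kpen M C K ((gam M C K : ℝ) : ℂ)) := by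
  classical
  set S : Set ℝ := {y : ℝ | ∃ x : Fin n → ℂ, x ≠ 0 ∧ rfun M C K x = y} with hS
  have hγdef : gam M C K = sSup S := rfl
  set γ : ℝ := gam M C K with hγ
  have hbdd : BddAbove S := by
    refine ⟨0, ?_⟩
    rintro y ⟨x, hx, rfl⟩
    unfold rfun
    exact scalar_r_nonpos (qf_pos hM hx) (qf_pos hC hx) (qf_pos hK hx)
  have hne : S.Nonempty := by
    refine ⟨rfun M C K (fun _ => 1), fun _ => 1, ?_, rfl⟩
    intro h0
    have := congrFun h0 ⟨0, hn⟩
    simp at this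
  have hub : ∀ x : Fin n → ℂ, x ≠ 0 → rfun M C K x ≤ γ := by
    intro x hx
    exact le_csSup hbdd ⟨x, hx, rfl⟩
  have hherm : (Kpen M C K (γ : ℂ)).IsHermitian :=
    Kpen_isHermitian hM.isHermitian hC.isHermitian hK.isHermitian γ
  have hPSD : (Kpen M C K (γ : ℂ)).PosSemidef := by
    refine .of_dotProduct_mulVec_nonneg hherm fun x => ?_
    rcases eq_or_ne x 0 with rfl | hx
    · simp
    · rw [show (Kpen M C K (γ:ℂ)).mulVec x = (Kpen M C K (γ:ℂ)) *ᵥ x from rfl] at *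
      rw [qf_eq hherm x, Complex.zero_le_real, qf_Kpen]
      refine scalar_q_nonneg (qf_pos hM hx) ?_
      have := hub x hx
      unfold rfun at this
      exact this
  refine ⟨hPSD, ?_⟩
  intro hu
  -- K(γ) would be positive definite
  have hPD : (Kpen M C K (γ : ℂ)).PosDef := by
    refine .of_dotProduct_mulVec_pos hherm fun x hx => ?_
    refine lt_of_le_of_ne (hPSD.dotProduct_mulVec_nonneg x) ?_
    intro h0
    have hz : (Kpen M C K (γ : ℂ)) *ᵥ x = 0 :=
      (hPSD.dotProduct_mulVec_zero_iff x).mp h0.symm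
    apply hx
    have hdet : IsUnit (Kpen M C K (γ : ℂ)).det :=
      (Matrix.isUnit_iff_isUnit_det _).mp hu
    calc x = ((Kpen M C K (γ : ℂ))⁻¹ * Kpen M C K (γ : ℂ)) *ᵥ x := by
          rw [Matrix.nonsing_inv_mul _ hdet, Matrix.one_mulVec]
      _ = (Kpen M C K (γ : ℂ))⁻¹ *ᵥ ((Kpen M C K (γ : ℂ)) *ᵥ x) := by
          rw [Matrix.mulVec_mulVec]
      _ = 0 := by rw [hz, Matrix.mulVec_zero]
  obtain ⟨aP, haP, hPb⟩ := qf_lower_bound hn hPD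
  obtain ⟨aD, haD, hDb⟩ := qf_lower_bound hn h
  obtain ⟨bD, hbD⟩ := qf_upper_bound hn (((2 * γ : ℝ) : ℂ) • M + C)
  obtain ⟨bM, hbM⟩ := qf_upper_bound hn M
  set BD : ℝ := max bD 1 with hBD
  set BM : ℝ := max bM 1 with hBM
  have hBDpos : 0 < BD := lt_of_lt_of_le one_pos (le_max_right _ _)
  have hBMpos : 0 < BM := lt_of_lt_of_le one_pos (le_max_right _ _)
  set δ : ℝ := min (aP / BD) (aD / (2 * BM)) with hδdef
  have hδ : 0 < δ := lt_min (div_pos haP hBDpos) (div_pos haD (by linarith))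
  have hub2 : ∀ y ∈ S, y ≤ γ - δ := by
    rintro y ⟨x, hx, rfl⟩
    have hNpos : 0 < eucNorm x := eucNorm_pos hx
    set N2 : ℝ := eucNorm x ^ 2 with hN2
    have hN2pos : 0 < N2 := by positivity
    have hm : 0 < qf M x := qf_pos hM hx
    have hd : 0 < qf (((2 * γ : ℝ) : ℂ) • M + C) x := qf_pos h hx
    have hp : aP * N2 ≤ γ ^ 2 * qf M x + γ * qf C x + qf K x := by
      have := hPb x
      rwa [qf_Kpen] at this
    have hd1 : aD * N2 ≤ 2 * γ * qf M x + qf C x := by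
      have := hDb x
      rwa [qf_D] at this
    have hd2 : 2 * γ * qf M x + qf C x ≤ BD * N2 := by
      have h1 := hbD x
      rw [qf_D] at h1
      refine h1.trans ?_
      exact mul_le_mul_of_nonneg_right (le_max_left _ _) (by positivity)
    have hm2 : qf M x ≤ BM * N2 := by
      refine (hbM x).trans ?_
      exact mul_le_mul_of_nonneg_right (le_max_left _ _) (by positivity)
    have hδ1 : δ * (2 * γ * qf M x + qf C x) ≤ aP * N2 := by
      have e1 : δ * (2 * γ * qf M x + qf C x) ≤ (aP / BD) * (BD * N2) := by
        apply mul_le_mul (min_le_left _ _) hd2 ?_ (div_nonneg haP.le hBDpos.le)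
        · rw [← qf_D M C γ x]; exact hd.le
      have e2 : (aP / BD) * (BD * N2) = aP * N2 := by
        field_simp
      linarith [e1, e2]
    have hδ2 : 2 * (δ * qf M x) ≤ aD * N2 := by
      have e1 : δ * qf M x ≤ (aD / (2 * BM)) * (BM * N2) :=
        mul_le_mul (min_le_right _ _) hm2 hm.le
          (div_nonneg haD.le (by linarith))
      have e2 : (aD / (2 * BM)) * (BM * N2) = aD * N2 / 2 := by
        field_simp
      rw [e2] at e1
      linarith
    unfold rfun
    refine scalar_r_le (qf_pos hM hx) ?_ ?_
    · nlinarith [mul_nonneg (mul_nonneg hδ.le hδ.le) hm.le]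
    · nlinarith
  have hle : γ ≤ γ - δ := csSup_le hne hub2
  linarith

end
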